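/- arXiv:2208.00038 — 2 statements merged into one kernel-verified Lean document; each statement's English description precedes it below -/
import Mathlib

section
/- Let |I| be a measurable cardinal, U a non-principal ω-complete ultrafilter on I, and X_i = (X_i, ρ_i) nonempty binary structures. Then the ultraproduct ∏_U X_i is connected if and only if {i ∈ I : X_i is connected} ∈ U. -/
/-- Reflexivization of a binary relation. -/
def rRefl {X : Type*} (ρ : X → X → Prop) : X → X → Prop := fun a b => ρ a b ∨ a = b

/-- Signed step: `ρ` for `false`, `ρ⁻¹` for `true` (after reflexivizing). -/
def rStep {X : Type*} (ρ : X → X → Prop) : Bool → X → X → Prop :=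
  fun e a b => if e then rRefl ρ b a else rRefl ρ a b

/-- `(z, ε)` is a path of length `n+1` from `x` to `y`. -/
def pathPts {X : Type*} {n : ℕ} (x y : X) (z : Fin n → X) : Fin (n + 2) → X :=
  Fin.cons x (Fin.snoc z y)

def IsPath {X : Type*} (ρ : X → X → Prop) {n : ℕ} (z : Fin n → X)
    (ε : Fin (n + 1) → Bool) (x y : X) : Prop :=
  ∀ k : Fin (n + 1), rStep ρ (ε k) (pathPts x y z k.castSucc) (pathPts x y z k.succ)

/-- There is a path of length `≤ n+1` from `x` to `y`. -/
def dLE {X : Type*} (ρ : X → X → Prop) (n : ℕ) (x y : X) : Prop :=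
  ∃ m, m ≤ n ∧ ∃ z : Fin m → X, ∃ ε : Fin (m + 1) → Bool, IsPath ρ z ε x y

/-- A binary structure is connected iff any two points are joined by a finite path. -/
def Conn {X : Type*} (ρ : X → X → Prop) : Prop := ∀ x y : X, ∃ n, dLE ρ n x y

/-- The setoid of a reduced product: agreement on a set in the filter. -/
def redSetoid {I : Type*} (Φ : Filter I) (X : I → Type*) : Setoid (∀ i, X i) where
  r x y := {i | x i = y i} ∈ Φ
  iseqv := by
    refine ⟨fun x => ?_, fun h => ?_, fun h1 h2 => ?_⟩
    · simpa using Filter.univ_mem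
    · filter_upwards [h] with i e using e.symm
    · filter_upwards [h1, h2] with i e1 e2 using e1.trans e2

/-- The relation of the reduced product. -/
def redRel {I : Type*} (Φ : Filter I) {X : I → Type*} (ρ : ∀ i, X i → X i → Prop) :
    Quotient (redSetoid Φ X) → Quotient (redSetoid Φ X) → Prop :=
  Quotient.lift₂ (fun x y => {i | ρ i (x i) (y i)} ∈ Φ)
    (by
      intro a b a' b' ha hb
      have ha' : {i | a i = a' i} ∈ Φ := ha
      have hb' : {i | b i = b' i} ∈ Φ := hb
      apply propext
      constructor
      · intro h
        filter_upwards [h, ha', hb'] with i h1 h2 h3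
        rw [← h2, ← h3]; exact h1
      · intro h
        filter_upwards [h, ha', hb'] with i h1 h2 h3
        rw [h2, h3]; exact h1)

/-- The coordinatewise relation of the direct product. -/
def dirRel {I : Type*} {X : I → Type*} (ρ : ∀ i, X i → X i → Prop) :
    (∀ i, X i) → (∀ i, X i) → Prop := fun x y => ∀ i, ρ i (x i) (y i)

/-- A non-principal ultrafilter contains no singleton. -/
def NonPrincipal {I : Type*} (U : Ultrafilter I) : Prop := ∀ a : I, {a} ∉ U

/-- An `ω`-complete (countably complete) ultrafilter. -/
def OmegaComplete {I : Type*} (U : Ultrafilter I) : Prop :=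
  ∀ f : ℕ → Set I, (∀ n, f n ∈ U) → (⋂ n, f n) ∈ U

/-- `|I|` is less than the first measurable cardinal: no subset of `I` carries a
non-principal `ω`-complete ultrafilter. -/
def NoMeasurableLE (I : Type*) : Prop :=
  ∀ J : Set I, ∀ U : Ultrafilter J, ¬ (NonPrincipal U ∧ OmegaComplete U)

/-- The linear graph on `ω`. -/
def linRel : ℕ → ℕ → Prop := fun m n => Nat.dist m n = 1

lemma pathPts_comp {X Y : Type*} (f : X → Y) {m : ℕ} (x y : X) (z : Fin m → X)
    (k : Fin (m + 2)) :
    pathPts (f x) (f y) (fun j => f (z j)) k = f (pathPts x y z k) := by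
  unfold pathPts
  induction k using Fin.cases with
  | zero => simp
  | succ j =>
    simp only [Fin.cons_succ]
    induction j using Fin.lastCases with
    | last => simp
    | cast j => simp

lemma ultra_exists_eq {I F : Type*} [Finite F] (U : Ultrafilter I) (f : I → F) :
    ∃ v, {i | f i = v} ∈ U := by
  by_contra h
  push_neg at h
  have hmem : ∀ v, {i | f i ≠ v} ∈ U := fun v => by
    exact Ultrafilter.compl_mem_iff_notMem.mpr (h v)
  have hI : (⋂ v, {i | f i ≠ v}) ∈ U := Filter.iInter_mem.mpr hmem
  obtain ⟨i, hi⟩ := Ultrafilter.nonempty_of_mem hI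
  exact (Set.mem_iInter.mp hi (f i)) rfl

lemma rRefl_red_iff {I : Type*} (U : Ultrafilter I) {X : I → Type*}
    (ρ : ∀ i, X i → X i → Prop) (u v : ∀ i, X i) :
    rRefl (redRel (U : Filter I) ρ) (Quotient.mk (redSetoid (U : Filter I) X) u)
      (Quotient.mk (redSetoid (U : Filter I) X) v) ↔
      {i | rRefl (ρ i) (u i) (v i)} ∈ U := by
  constructor
  · rintro (h | h)
    · have h' : {i | ρ i (u i) (v i)} ∈ (U : Filter I) := h
      exact Filter.mem_of_superset h' fun i hi => Or.inl hi
    · have h' : {i | u i = v i} ∈ (U : Filter I) := Quotient.exact h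
      exact Filter.mem_of_superset h' fun i hi => Or.inr hi
  · intro h
    have h2 : {i | ρ i (u i) (v i)} ∪ {i | u i = v i} ∈ U := h
    rcases Ultrafilter.union_mem_iff.mp h2 with h' | h'
    · exact Or.inl h'
    · exact Or.inr (Quotient.sound h')

lemma rStep_red_iff {I : Type*} (U : Ultrafilter I) {X : I → Type*}
    (ρ : ∀ i, X i → X i → Prop) (e : Bool) (u v : ∀ i, X i) :
    rStep (redRel (U : Filter I) ρ) e (Quotient.mk (redSetoid (U : Filter I) X) u)
      (Quotient.mk (redSetoid (U : Filter I) X) v) ↔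
      {i | rStep (ρ i) e (u i) (v i)} ∈ U := by
  cases e
  · simpa [rStep] using rRefl_red_iff U ρ u v
  · simpa [rStep] using rRefl_red_iff U ρ v u

theorem stmt_10 {I : Type*} (U : Ultrafilter I) (hU : NonPrincipal U)
    (hω : OmegaComplete U) {X : I → Type*} [∀ i, Nonempty (X i)]
    (ρ : ∀ i, X i → X i → Prop) :
    Conn (redRel (U : Filter I) ρ) ↔ {i | Conn (ρ i)} ∈ U := by
  constructor
  · -- forward
    intro hConn
    by_contra hB
    have hBc : {i | ¬ Conn (ρ i)} ∈ U := by
      exact Ultrafilter.compl_mem_iff_notMem.mpr hB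
    have hch : ∀ i, ∃ pq : X i × X i, ¬ Conn (ρ i) → ∀ n, ¬ dLE (ρ i) n pq.1 pq.2 := by
      intro i
      by_cases hc : Conn (ρ i)
      · exact ⟨⟨Classical.arbitrary _, Classical.arbitrary _⟩, fun h => absurd hc h⟩
      · rw [Conn] at hc
        push_neg at hc
        obtain ⟨x, y, hxy⟩ := hc
        exact ⟨⟨x, y⟩, fun _ => hxy⟩
    choose pq hpq using hch
    set x : ∀ i, X i := fun i => (pq i).1 with hxdef
    set y : ∀ i, X i := fun i => (pq i).2 with hydef
    obtain ⟨n, m, hm, z, ε, hpath⟩ :=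
      hConn (Quotient.mk (redSetoid (U : Filter I) X) x) (Quotient.mk (redSetoid (U : Filter I) X) y)
    set w : Fin m → ∀ i, X i := fun j => (z j).out with hwdef
    have e1 : pathPts (Quotient.mk (redSetoid (U : Filter I) X) x)
        (Quotient.mk (redSetoid (U : Filter I) X) y) z
        = fun k => Quotient.mk (redSetoid (U : Filter I) X) (pathPts x y w k) := by
      funext k'
      rw [show z = fun j => Quotient.mk (redSetoid (U : Filter I) X) (w j) by
        funext j; exact (Quotient.out_eq (z j)).symm]
      exact pathPts_comp (Quotient.mk (redSetoid (U : Filter I) X)) x y w k'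
    have hstep : ∀ k : Fin (m+1),
        {i | rStep (ρ i) (ε k) (pathPts x y w k.castSucc i) (pathPts x y w k.succ i)} ∈ U := by
      intro k
      have h0 := hpath k
      rw [e1] at h0
      exact (rStep_red_iff U ρ (ε k) _ _).mp h0
    have hT : (⋂ k : Fin (m+1), {i | rStep (ρ i) (ε k)
        (pathPts x y w k.castSucc i) (pathPts x y w k.succ i)}) ∈ U :=
      Filter.iInter_mem.mpr hstep
    obtain ⟨i, hi1, hi2⟩ := Ultrafilter.nonempty_of_mem (U.inter_mem hT hBc)
    have hip : IsPath (ρ i) (fun j => w j i) ε (x i) (y i) := by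
      intro k
      have := Set.mem_iInter.mp hi1 k
      have ec : ∀ k' : Fin (m+2), pathPts (x i) (y i) (fun j => w j i) k' = pathPts x y w k' i :=
        fun k' => pathPts_comp (fun g : (∀ i, X i) => g i) x y w k'
      rw [ec, ec]
      exact this
    exact hpq i hi2 m ⟨m, le_refl m, _, ε, hip⟩
  · -- backward
    intro hC
    intro a b
    set x : ∀ i, X i := a.out with hxdef
    set y : ∀ i, X i := b.out with hydef
    have hax : a = Quotient.mk (redSetoid (U : Filter I) X) x := (Quotient.out_eq a).symm
    have hby : b = Quotient.mk (redSetoid (U : Filter I) X) y := (Quotient.out_eq b).symm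
    -- find uniform bound n
    have hn : ∃ n, {i | dLE (ρ i) n (x i) (y i)} ∈ U := by
      by_contra h
      push_neg at h
      have hmem : ∀ n, {i | ¬ dLE (ρ i) n (x i) (y i)} ∈ U := fun n => by
        exact Ultrafilter.compl_mem_iff_notMem.mpr (h n)
      have hI : (⋂ n, {i | ¬ dLE (ρ i) n (x i) (y i)}) ∈ U := hω _ hmem
      obtain ⟨i, hi1, hi2⟩ := Ultrafilter.nonempty_of_mem (U.inter_mem hI hC)
      obtain ⟨n, hdn⟩ := hi2 (x i) (y i)
      exact Set.mem_iInter.mp hi1 n hdn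
    obtain ⟨n, hCn⟩ := hn
    -- pigeonhole on (length, sign sequence)
    have hch : ∀ i, ∃ p : Σ m : Fin (n+1), (Fin (m.1 + 1) → Bool),
        dLE (ρ i) n (x i) (y i) → ∃ z : Fin p.1.1 → X i, IsPath (ρ i) z p.2 (x i) (y i) := by
      intro i
      by_cases hd : dLE (ρ i) n (x i) (y i)
      · obtain ⟨m, hm, z, ε, hp⟩ := hd
        exact ⟨⟨⟨m, Nat.lt_succ_of_le hm⟩, ε⟩, fun _ => ⟨z, hp⟩⟩
      · exact ⟨⟨⟨0, Nat.succ_pos n⟩, fun _ => false⟩, fun h => absurd h hd⟩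
    choose F hF using hch
    obtain ⟨p, hp⟩ := ultra_exists_eq U F
    set m := p.1.1 with hmdef
    have hmn : m ≤ n := Nat.lt_succ_iff.mp p.1.2
    set ε : Fin (m + 1) → Bool := p.2 with hedef
    have hgood : ∀ i, ∃ z : Fin m → X i, i ∈ {i | F i = p} ∩ {i | dLE (ρ i) n (x i) (y i)} →
        IsPath (ρ i) z ε (x i) (y i) := by
      intro i
      by_cases hg : i ∈ {i | F i = p} ∩ {i | dLE (ρ i) n (x i) (y i)}
      · obtain ⟨hg1, hg2⟩ := hg
        have := hF i hg2
        rw [hg1] at this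
        obtain ⟨z, hz⟩ := this
        exact ⟨z, fun _ => hz⟩
      · exact ⟨fun _ => Classical.arbitrary _, fun h => absurd h hg⟩
    choose zf hzf using hgood
    refine ⟨n, m, hmn, fun j => Quotient.mk (redSetoid (U : Filter I) X) (fun i => zf i j), ε, ?_⟩
    intro k
    rw [hax, hby]
    have e1 : pathPts (Quotient.mk (redSetoid (U : Filter I) X) x)
        (Quotient.mk (redSetoid (U : Filter I) X) y)
        (fun j => Quotient.mk (redSetoid (U : Filter I) X) (fun i => zf i j))
        = fun k => Quotient.mk (redSetoid (U : Filter I) X) (pathPts x y (fun j i => zf i j) k) :=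
      funext fun k' => pathPts_comp (Quotient.mk (redSetoid (U : Filter I) X)) x y _ k'
    rw [e1]
    refine (rStep_red_iff U ρ (ε k) _ _).mpr ?_
    refine Filter.mem_of_superset ((U.inter_mem hp hCn) : _ ∈ (U : Filter I)) ?_
    intro i hi
    have hip := hzf i hi k
    have ec : ∀ k' : Fin (m+2), pathPts (x i) (y i) (fun j => zf i j) k' = pathPts x y (fun j i => zf i j) k' i :=
      fun k' => pathPts_comp (fun g : (∀ i, X i) => g i) x y (fun j i => zf i j) k'
    simpa [ec] using hip
end

section
/- For an infinite set I the following are equivalent: (i) |I| is less than the first measurable cardinal (i.e., no cardinal ≤ |I| is measurable); (iii) for every non-principal ultrafilter U on I, the ultrapower ∏_U G_ω of the linear graph on ω is disconnected. -/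
/- ## Auxiliary lemmas -/

/-- A coordinatewise geodesic walk in `ℕ` from `a` towards `b`. -/
def walk (a b t : ℕ) : ℕ := if a ≤ b then min (a+t) b else max b (a - t)

lemma walk_zero (a b : ℕ) : walk a b 0 = a := by
  unfold walk; split_ifs <;> omega

lemma walk_step (a b t : ℕ) : Nat.dist (walk a b t) (walk a b (t+1)) ≤ 1 := by
  unfold walk Nat.dist; split_ifs <;> omega

lemma walk_end (a b t : ℕ) (h : Nat.dist a b ≤ t) : walk a b t = b := by
  unfold Nat.dist at h; unfold walk; split_ifs <;> omega

lemma rRefl_linRel_iff {a b : ℕ} : rRefl linRel a b ↔ Nat.dist a b ≤ 1 := by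
  unfold rRefl linRel Nat.dist; omega

lemma pathPts_map {X Y : Type*} (f : X → Y) {n : ℕ} (x y : X) (z : Fin n → X)
    (t : Fin (n+2)) : pathPts (f x) (f y) (f ∘ z) t = f (pathPts x y z t) := by
  unfold pathPts
  refine Fin.cases ?_ (fun j => ?_) t
  · simp
  · simp only [Fin.cons_succ]
    refine Fin.lastCases ?_ (fun j' => ?_) j <;> simp

lemma pathPts_zero {X : Type*} {n : ℕ} (x y : X) (z : Fin n → X) :
    pathPts x y z 0 = x := by simp [pathPts]

lemma pathPts_last {X : Type*} {n : ℕ} (x y : X) (z : Fin n → X) :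
    pathPts x y z (Fin.last (n+1)) = y := by
  unfold pathPts
  rw [← Fin.succ_last, Fin.cons_succ, Fin.snoc_last]

section quot
variable {I : Type*} (U : Ultrafilter I)

lemma rRefl_redRel (a b : I → ℕ)
    (h : {i | rRefl linRel (a i) (b i)} ∈ U) :
    rRefl (redRel (U : Filter I) (fun _ : I => linRel))
      (Quotient.mk _ a) (Quotient.mk _ b) := by
  have h2 : {i | linRel (a i) (b i)} ∪ {i | a i = b i} ∈ U := by
    have heq : {i | rRefl linRel (a i) (b i)}
        = {i | linRel (a i) (b i)} ∪ {i | a i = b i} := by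
      ext i; simp [rRefl, Set.mem_union]
    rwa [heq] at h
  rcases (Ultrafilter.union_mem_iff.mp h2) with h3 | h3
  · exact Or.inl (show {i | linRel (a i) (b i)} ∈ (U : Filter I) from h3)
  · exact Or.inr (Quotient.sound h3)

lemma conn_of
    (h : ∀ x y : I → ℕ, ∃ n, {i | Nat.dist (x i) (y i) ≤ n} ∈ U) :
    Conn (redRel (U : Filter I) (fun _ : I => linRel)) := by
  intro X Y
  induction X, Y using Quotient.inductionOn₂ with
  | _ x y =>
  obtain ⟨n, hn⟩ := h x y
  set Zrep : Fin n → (I → ℕ) := fun j i => walk (x i) (y i) (j.val + 1) with hZ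
  refine ⟨n, n, le_rfl, fun j => Quotient.mk _ (Zrep j), fun _ => false, ?_⟩
  intro k
  show rRefl (redRel (U : Filter I) (fun _ : I => linRel)) _ _
  have hmap : ∀ t : Fin (n+2),
      pathPts (Quotient.mk (redSetoid (U : Filter I) fun _ : I => ℕ) x)
        (Quotient.mk _ y) (fun j => Quotient.mk _ (Zrep j)) t
        = Quotient.mk _ (pathPts x y Zrep t) :=
    fun t => pathPts_map (Quotient.mk _) x y Zrep t
  rw [hmap, hmap]
  apply rRefl_redRel
  have key : ∀ i, Nat.dist (x i) (y i) ≤ n →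
      ∀ t : Fin (n+2), pathPts x y Zrep t i = walk (x i) (y i) t.val := by
    intro i hi t
    refine Fin.cases ?_ (fun j => ?_) t
    · simp [pathPts, walk_zero]
    · unfold pathPts
      rw [Fin.cons_succ]
      refine Fin.lastCases ?_ (fun j' => ?_) j
      · rw [Fin.snoc_last]
        have hle : Nat.dist (x i) (y i) ≤ (Fin.last n).succ.val := by
          simp [Fin.val_last]; omega
        rw [walk_end _ _ _ hle]
      · rw [Fin.snoc_castSucc]
        simp [hZ, Fin.val_succ]
  filter_upwards [hn] with i hi
  rw [rRefl_linRel_iff, key i hi, key i hi]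
  have := walk_step (x i) (y i) k.castSucc.val
  simpa [Fin.val_succ, Fin.coe_castSucc] using this

lemma out_dist (A B : Quotient (redSetoid (U : Filter I) (fun _ : I => ℕ)))
    (h : rRefl (redRel (U : Filter I) (fun _ : I => linRel)) A B) :
    {i | Nat.dist (A.out i) (B.out i) ≤ 1} ∈ U := by
  rcases h with h | rfl
  · have h2 : redRel (U : Filter I) (fun _ : I => linRel)
        (Quotient.mk _ A.out) (Quotient.mk _ B.out) := by
      rw [Quotient.out_eq, Quotient.out_eq]; exact h
    have h3 : {i | linRel (A.out i) (B.out i)} ∈ (U : Filter I) := h2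
    filter_upwards [h3] with i hi
    unfold linRel at hi; omega
  · filter_upwards with i; simp [Nat.dist_self]

lemma dist_of_dLE {x y : I → ℕ} {n : ℕ}
    (h : dLE (redRel (U : Filter I) (fun _ : I => linRel)) n
      (Quotient.mk _ x) (Quotient.mk _ y)) :
    {i | Nat.dist (x i) (y i) ≤ n + 1} ∈ U := by
  obtain ⟨m, hm, z, ε, hP⟩ := h
  set w : Fin (m+2) → (I → ℕ) :=
    fun t => (pathPts (Quotient.mk (redSetoid (U : Filter I) fun _ : I => ℕ) x)
      (Quotient.mk _ y) z t).out with hw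
  have step : ∀ k : Fin (m+1),
      {i | Nat.dist (w k.castSucc i) (w k.succ i) ≤ 1} ∈ U := by
    intro k
    have hPk := hP k
    unfold rStep at hPk
    rcases hε : ε k with _ | _
    · rw [hε] at hPk; simp only [Bool.false_eq_true, if_false] at hPk
      exact out_dist U _ _ hPk
    · rw [hε] at hPk; simp only [if_true] at hPk
      have := out_dist U _ _ hPk
      filter_upwards [this] with i hi
      rw [Nat.dist_comm]; exact hi
  have main : ∀ t : ℕ, ∀ ht : t < m + 2,
      {i | Nat.dist (w 0 i) (w ⟨t, ht⟩ i) ≤ t} ∈ U := by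
    intro t
    induction t with
    | zero =>
      intro ht
      filter_upwards with i
      simp [show (⟨0, ht⟩ : Fin (m+2)) = 0 from rfl, Nat.dist_self]
    | succ t ih =>
      intro ht
      have ht' : t < m + 2 := by omega
      have hk : t < m + 1 := by omega
      have hstep := step ⟨t, hk⟩
      simp only [Fin.castSucc_mk, Fin.succ_mk] at hstep
      filter_upwards [ih ht', hstep] with i h1 h2
      calc Nat.dist (w 0 i) (w ⟨t+1, ht⟩ i)
          ≤ Nat.dist (w 0 i) (w ⟨t, ht'⟩ i) + Nat.dist (w ⟨t, ht'⟩ i) (w ⟨t+1, ht⟩ i) :=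
            Nat.dist.triangle_inequality _ _ _
        _ ≤ t + 1 := by omega
  have hlast := main (m+1) (by omega)
  have hx0 : {i | w 0 i = x i} ∈ U := by
    have heq : (Quotient.mk (redSetoid (U : Filter I) fun _ : I => ℕ) (w 0))
        = Quotient.mk _ x := by
      rw [hw]; simp only; rw [pathPts_zero, Quotient.out_eq]
    exact Quotient.exact heq
  have hyl : {i | w ⟨m+1, by omega⟩ i = y i} ∈ U := by
    have hlasteq : (⟨m+1, by omega⟩ : Fin (m+2)) = Fin.last (m+1) := rfl
    have heq : (Quotient.mk (redSetoid (U : Filter I) fun _ : I => ℕ) (w ⟨m+1, by omega⟩))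
        = Quotient.mk _ y := by
      rw [hw]; simp only; rw [hlasteq, pathPts_last, Quotient.out_eq]
    exact Quotient.exact heq
  filter_upwards [hlast, hx0, hyl] with i h1 h2 h3
  rw [h2, h3] at h1; omega

end quot

lemma not_omegaComplete {I : Type*} (h : NoMeasurableLE I) (U : Ultrafilter I)
    (hU : NonPrincipal U) : ¬ OmegaComplete U := by
  intro hOC
  set e : I ≃ (Set.univ : Set I) := (Equiv.Set.univ I).symm with he
  refine h Set.univ (U.map e) ⟨?_, ?_⟩
  · intro a ha
    have hpre : e ⁻¹' {a} ∈ U := ha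
    have heq : e ⁻¹' {a} = {e.symm a} := by
      ext i; simp [Equiv.eq_symm_apply, eq_comm]
    rw [heq] at hpre
    exact hU _ hpre
  · intro f hf
    have hpre : ∀ n, e ⁻¹' (f n) ∈ U := fun n => hf n
    have hint : (⋂ n, e ⁻¹' (f n)) ∈ U := hOC _ hpre
    have h2 : e ⁻¹' (⋂ n, f n) ∈ U := by rwa [Set.preimage_iInter]
    exact h2

lemma map_val_nonprincipal {I : Type*} {J : Set I} (U : Ultrafilter J)
    (hNP : NonPrincipal U) : NonPrincipal (U.map (Subtype.val : J → I)) := by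
  intro a ha
  have hpre : (Subtype.val : J → I) ⁻¹' {a} ∈ U := ha
  by_cases haJ : a ∈ J
  · have heq : ((Subtype.val : J → I) ⁻¹' {a}) = {⟨a, haJ⟩} := by
      ext j; simp [Subtype.ext_iff]
    rw [heq] at hpre
    exact hNP _ hpre
  · have heq : ((Subtype.val : J → I) ⁻¹' {a}) = ∅ := by
      ext j; simp only [Set.mem_preimage, Set.mem_singleton_iff, Set.mem_empty_iff_false,
        iff_false]
      rintro rfl; exact haJ j.2
    rw [heq] at hpre
    exact Ultrafilter.empty_notMem hpre

theorem stmt_14 {I : Type*} [Infinite I] :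
    NoMeasurableLE I ↔
      ∀ U : Ultrafilter I, NonPrincipal U →
        ¬ Conn (redRel (U : Filter I) (fun _ : I => linRel)) := by
  constructor
  · intro h U hU hConn
    classical
    have hnOC := not_omegaComplete h U hU
    unfold OmegaComplete at hnOC
    push_neg at hnOC
    obtain ⟨f, hf, hnf⟩ := hnOC
    set g : ℕ → Set I := fun n => ⋂ k ∈ Set.Iic n, f k with hg
    have hgU : ∀ n, g n ∈ U := fun n =>
      (Filter.biInter_mem (Set.finite_Iic n)).mpr (fun k _ => hf k)
    have hgf : (⋂ n, g n) = ⋂ n, f n := by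
      ext i
      simp only [hg, Set.mem_iInter, Set.mem_Iic]
      exact ⟨fun hh k => hh k k le_rfl, fun hh n k _ => hh k⟩
    have hnotg : (⋂ n, g n) ∉ U := by rwa [hgf]
    have hcompl : (⋂ n, g n)ᶜ ∈ U := (Ultrafilter.compl_mem_iff_notMem).mpr hnotg
    set x : I → ℕ := fun i => if hex : ∃ n, i ∉ g n then Nat.find hex else 0 with hx
    obtain ⟨n, hd⟩ := hConn (Quotient.mk _ x) (Quotient.mk _ (fun _ => 0))
    have hA : {i | Nat.dist (x i) 0 ≤ n + 1} ∈ U := dist_of_dLE U hd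
    have hB : g (n+1) ∩ (⋂ k, g k)ᶜ ∈ U := Filter.inter_mem (hgU (n+1)) hcompl
    have hne : ({i | Nat.dist (x i) 0 ≤ n+1} ∩ (g (n+1) ∩ (⋂ k, g k)ᶜ)).Nonempty :=
      Ultrafilter.nonempty_of_mem (Filter.inter_mem hA hB)
    obtain ⟨i, hi1, hi2, hi3⟩ := hne
    have hex : ∃ m, i ∉ g m := by
      simpa [Set.mem_iInter] using hi3
    have hxi : x i = Nat.find hex := by rw [hx]; simp [dif_pos hex]
    have hspec : i ∉ g (x i) := by rw [hxi]; exact Nat.find_spec hex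
    have hle : x i ≤ n+1 := by
      have := hi1
      simp only [Set.mem_setOf_eq] at this
      unfold Nat.dist at this; omega
    apply hspec
    simp only [hg, Set.mem_iInter, Set.mem_Iic] at hi2 ⊢
    intro k hk
    exact hi2 k (le_trans hk hle)
  · intro h J U hUJ
    obtain ⟨hNP, hOC⟩ := hUJ
    set V := U.map (Subtype.val : J → I) with hV
    refine h V (map_val_nonprincipal U hNP) (conn_of V ?_)
    intro x y
    by_contra hc
    push_neg at hc
    have hcomp : ∀ n, (Subtype.val : J → I) ⁻¹' ({i | Nat.dist (x i) (y i) ≤ n}ᶜ) ∈ U := by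
      intro n
      have : {i | Nat.dist (x i) (y i) ≤ n}ᶜ ∈ V :=
        (Ultrafilter.compl_mem_iff_notMem).mpr (hc n)
      exact this
    have hint := hOC _ hcomp
    obtain ⟨j, hj⟩ := Ultrafilter.nonempty_of_mem hint
    have hjj := Set.mem_iInter.mp hj (Nat.dist (x j.val) (y j.val))
    simp only [Set.mem_preimage, Set.mem_compl_iff, Set.mem_setOf_eq] at hjj
    exact hjj le_rfl
end
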